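/- A finite sequence of points p₁, ..., p_m in the plane with strictly increasing x-coordinates forms the vertex sequence of the upper hull of its point set if and only if every consecutive triple (p_{i−1}, p_i, p_{i+1}) makes a right turn (cross product (p_i − p_{i−1}) × (p_{i+1} − p_i) < 0). -/

import Mathlib

open scoped Classical

noncomputable section

/-- Signed area / cross product `(a - o) × (b - o)`. Positive means `b` lies to the
left of the directed line from `o` to `a`; for `o.1 < a.1`, `cross o a b > 0` means
`b` is strictly above the line through `o` and `a`. -/
def cross (o a b : ℝ × ℝ) : ℝ :=
  (a.1 - o.1) * (b.2 - o.2) - (a.2 - o.2) * (b.1 - o.1)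

/-- `q` is a vertex of the upper hull of `S`: `q ∈ S` and `q` is not strictly below
any segment joining two points of `S` on either side of it. -/
def IsUHVertex (S : Finset (ℝ × ℝ)) (q : ℝ × ℝ) : Prop :=
  q ∈ S ∧ ∀ u ∈ S, ∀ v ∈ S, u.1 < q.1 → q.1 < v.1 → 0 ≤ cross u v q

/-- `(a, b)` is an edge of the upper hull of `S`: all points of `S` lie on or below the
line through `a` and `b`, and no point of `S` strictly between them in `x`-coordinate
lies on that line (adjacency). -/
def IsUHEdge (S : Finset (ℝ × ℝ)) (a b : ℝ × ℝ) : Prop :=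
  a ∈ S ∧ b ∈ S ∧ a.1 < b.1 ∧ (∀ s ∈ S, cross a b s ≤ 0) ∧
    ∀ s ∈ S, a.1 < s.1 → s.1 < b.1 → cross a b s < 0

/-- Slope of the segment from `u` to `v`. -/
def slp (u v : ℝ × ℝ) : ℝ := (v.2 - u.2) / (v.1 - u.1)

lemma cross_slp_right (u v w : ℝ × ℝ) (h1 : u.1 < v.1) (h2 : v.1 < w.1) :
    cross u v w = (v.1 - u.1) * (w.1 - v.1) * (slp v w - slp u v) := by
  have e1 : v.1 - u.1 ≠ 0 := by linarith
  have e2 : w.1 - v.1 ≠ 0 := by linarith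
  unfold cross slp
  field_simp
  ring

lemma cross_slp_left (u v w : ℝ × ℝ) (h1 : w.1 < u.1) (h2 : u.1 < v.1) :
    cross u v w = (v.1 - u.1) * (u.1 - w.1) * (slp u v - slp w u) := by
  have e1 : v.1 - u.1 ≠ 0 := by linarith
  have e2 : u.1 - w.1 ≠ 0 := by linarith
  unfold cross slp
  field_simp
  ring

lemma slp_mediant (u v w : ℝ × ℝ) (h1 : u.1 < v.1) (h2 : v.1 < w.1) :
    (w.1 - u.1) * slp u w = (v.1 - u.1) * slp u v + (w.1 - v.1) * slp v w := by
  have e1 : v.1 - u.1 ≠ 0 := by linarith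
  have e2 : w.1 - v.1 ≠ 0 := by linarith
  have e3 : w.1 - u.1 ≠ 0 := by linarith
  unfold slp
  field_simp
  ring

/-- A finite sequence `p 0, …, p (m-1)` of points with strictly increasing
`x`-coordinates (no three collinear) is the vertex sequence of the upper hull of its
point set (i.e. every point lies on or below each segment `p i, p (i+1)`) iff every
consecutive triple makes a right turn. -/
theorem upper_hull_chain_iff_right_turns
    (m : ℕ) (hm : 2 ≤ m) (p : ℕ → ℝ × ℝ)
    (hmono : ∀ i j : ℕ, i < j → j < m → (p i).1 < (p j).1)
    (hgen : ∀ i j k : ℕ, i < j → j < k → k < m → cross (p i) (p j) (p k) ≠ 0) :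
    (∀ i : ℕ, i + 1 < m → ∀ j : ℕ, j < m → cross (p i) (p (i + 1)) (p j) ≤ 0) ↔
      (∀ i : ℕ, 1 ≤ i → i + 1 < m → cross (p (i - 1)) (p i) (p (i + 1)) < 0) := by
  constructor
  · intro h i h1 h2
    have h0 : i - 1 + 1 = i := by omega
    have hle := h (i - 1) (by omega) (i + 1) h2
    rw [h0] at hle
    exact lt_of_le_of_ne hle (hgen (i - 1) i (i + 1) (by omega) (by omega) h2)
  · intro hrt
    -- slopes are strictly decreasing
    have hdec : ∀ k : ℕ, 1 ≤ k → k + 1 < m →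
        slp (p k) (p (k + 1)) < slp (p (k - 1)) (p k) := by
      intro k hk hkm
      have hc := hrt k hk hkm
      have hx1 : (p (k - 1)).1 < (p k).1 := hmono _ _ (by omega) (by omega)
      have hx2 : (p k).1 < (p (k + 1)).1 := hmono _ _ (by omega) hkm
      rw [cross_slp_right _ _ _ hx1 hx2] at hc
      nlinarith [mul_pos (sub_pos.2 hx1) (sub_pos.2 hx2), sub_pos.2 hx1, sub_pos.2 hx2]
    -- slope bounds for chords
    have hbound : ∀ j k : ℕ, j + 1 ≤ k → k < m →
        slp (p (k - 1)) (p k) ≤ slp (p j) (p k) ∧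
          slp (p j) (p k) ≤ slp (p j) (p (j + 1)) := by
      intro j k hjk
      induction k, hjk using Nat.le_induction with
      | base =>
        intro _
        simp
      | succ k hk ih =>
        intro hm1
        have hkm : k < m := by omega
        obtain ⟨ih1, ih2⟩ := ih hkm
        have hx1 : (p j).1 < (p k).1 := hmono _ _ (by omega) hkm
        have hx2 : (p k).1 < (p (k + 1)).1 := hmono _ _ (by omega) hm1
        have hmed := slp_mediant (p j) (p k) (p (k + 1)) hx1 hx2
        have hdk : slp (p k) (p (k + 1)) < slp (p (k - 1)) (p k) :=
          hdec k (by omega) hm1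
        have h3 : slp (p k) (p (k + 1)) < slp (p j) (p k) := lt_of_lt_of_le hdk ih1
        have hs : k + 1 - 1 = k := by omega
        rw [hs]
        constructor
        · nlinarith [mul_pos (sub_pos.2 hx1) (sub_pos.2 hx2), sub_pos.2 hx1, sub_pos.2 hx2]
        · nlinarith [mul_pos (sub_pos.2 hx1) (sub_pos.2 hx2), sub_pos.2 hx1, sub_pos.2 hx2]
    intro i h1 j h2
    rcases lt_trichotomy j i with hji | hji | hji
    · -- j to the left of i
      have hx1 : (p j).1 < (p i).1 := hmono _ _ hji (by omega)
      have hx2 : (p i).1 < (p (i + 1)).1 := hmono _ _ (by omega) h1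
      rw [cross_slp_left _ _ _ hx1 hx2]
      have hb := (hbound j i (by omega) (by omega)).1
      have hd : slp (p i) (p (i + 1)) < slp (p (i - 1)) (p i) := hdec i (by omega) h1
      nlinarith [mul_pos (sub_pos.2 hx1) (sub_pos.2 hx2), sub_pos.2 hx1, sub_pos.2 hx2]
    · subst hji
      have : cross (p j) (p (j + 1)) (p j) = 0 := by unfold cross; ring
      linarith
    · rcases eq_or_lt_of_le (Nat.succ_le_of_lt hji) with hji2 | hji2
      · rw [← hji2]
        have : cross (p i) (p (i + 1)) (p (i + 1)) = 0 := by unfold cross; ring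
        linarith
      · -- j to the right of i+1
        have hx1 : (p i).1 < (p (i + 1)).1 := hmono _ _ (by omega) h1
        have hx2 : (p (i + 1)).1 < (p j).1 := hmono _ _ (by omega) h2
        rw [cross_slp_right _ _ _ hx1 hx2]
        have hb := (hbound (i + 1) j (by omega) h2).2
        have hd : slp (p (i + 1)) (p (i + 2)) < slp (p i) (p (i + 1)) := by
          have := hdec (i + 1) (by omega) (by omega)
          simpa using this
        nlinarith [mul_pos (sub_pos.2 hx1) (sub_pos.2 hx2), sub_pos.2 hx1, sub_pos.2 hx2]
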